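/- Let F be an n×n real Metzler matrix (all off-diagonal entries nonnegative) that is Hurwitz stable. Then there exists a vector v ∈ ℝⁿ with all entries strictly positive such that every entry of the row vector vᵀ F is strictly negative. -/

import Mathlib

open Matrix Finset Filter Topology

namespace MetzlerAux

variable {n : ℕ}

/-- total sum of entries -/
def tot (X : Matrix (Fin n) (Fin n) ℝ) : ℝ := ∑ i, ∑ j, X i j

/-- entrywise nonnegative -/
def Nn (X : Matrix (Fin n) (Fin n) ℝ) : Prop := ∀ i j, 0 ≤ X i j

lemma Nn.tot_nonneg {X : Matrix (Fin n) (Fin n) ℝ} (hX : Nn X) : 0 ≤ tot X :=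
  Finset.sum_nonneg fun i _ => Finset.sum_nonneg fun j _ => hX i j

lemma Nn.row_le_tot {X : Matrix (Fin n) (Fin n) ℝ} (hX : Nn X) (i : Fin n) :
    ∑ k, X i k ≤ tot X :=
  Finset.single_le_sum (f := fun i => ∑ k, X i k)
    (fun k _ => Finset.sum_nonneg fun l _ => hX k l) (mem_univ i)

lemma Nn.entry_le_tot {X : Matrix (Fin n) (Fin n) ℝ} (hX : Nn X) (i j : Fin n) :
    X i j ≤ tot X :=
  (Finset.single_le_sum (fun k _ => hX i k) (mem_univ j)).trans (hX.row_le_tot i)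

lemma Nn.mul {X Y : Matrix (Fin n) (Fin n) ℝ} (hX : Nn X) (hY : Nn Y) : Nn (X * Y) :=
  fun i j => by
    rw [Matrix.mul_apply]
    exact Finset.sum_nonneg fun k _ => mul_nonneg (hX i k) (hY k j)

lemma Nn.one : Nn (1 : Matrix (Fin n) (Fin n) ℝ) := by
  intro i j
  by_cases h : i = j <;> simp [Matrix.one_apply, h]

lemma Nn.pow {X : Matrix (Fin n) (Fin n) ℝ} (hX : Nn X) : ∀ k, Nn (X ^ k)
  | 0 => by rw [pow_zero]; exact Nn.one
  | (k+1) => by rw [pow_succ]; exact (Nn.pow hX k).mul hX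

lemma Nn.pow_entry_le {X : Matrix (Fin n) (Fin n) ℝ} (hX : Nn X) :
    ∀ (k : ℕ) (i j : Fin n), (X ^ k) i j ≤ (tot X) ^ k
  | 0, i, j => by
      rw [pow_zero, pow_zero]
      by_cases h : i = j <;> simp [Matrix.one_apply, h]
  | (k+1), i, j => by
      rw [pow_succ', Matrix.mul_apply]
      calc ∑ l, X i l * (X^k) l j ≤ ∑ l, X i l * (tot X)^k := by
            refine Finset.sum_le_sum fun l _ => ?_
            exact mul_le_mul_of_nonneg_left (hX.pow_entry_le k l j) (hX i l)
        _ = (∑ l, X i l) * (tot X)^k := by rw [Finset.sum_mul]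
        _ ≤ tot X * (tot X)^k :=
            mul_le_mul_of_nonneg_right (hX.row_le_tot i) (pow_nonneg hX.tot_nonneg k)
        _ = (tot X)^(k+1) := (pow_succ' _ _).symm

lemma geom_le {r : ℝ} (h0 : 0 ≤ r) (h1 : r < 1) (M : ℕ) :
    ∑ m ∈ range M, r ^ m ≤ (1 - r)⁻¹ := by
  have h2 : (0:ℝ) < 1 - r := by linarith
  have h3 : (1 - r) * ∑ m ∈ range M, r ^ m = 1 - r ^ M := by
    have h := geom_sum_mul r M
    linear_combination -h
  have h5 : 1 - r ^ M ≤ 1 := by nlinarith [pow_nonneg h0 M]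
  calc ∑ m ∈ range M, r ^ m = (1-r)⁻¹ * ((1-r) * ∑ m ∈ range M, r ^ m) := by
        field_simp
    _ = (1-r)⁻¹ * (1 - r^M) := by rw [h3]
    _ ≤ (1-r)⁻¹ * 1 := mul_le_mul_of_nonneg_left h5 (by positivity)
    _ = (1-r)⁻¹ := mul_one _

/-- partial sums of the Neumann series for `(t•1 - B)⁻¹` -/
noncomputable def T (B : Matrix (Fin n) (Fin n) ℝ) (t : ℝ) (N : ℕ) : Matrix (Fin n) (Fin n) ℝ :=
  ∑ k ∈ range N, (t⁻¹) ^ (k+1) • B ^ k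

lemma T_apply (B : Matrix (Fin n) (Fin n) ℝ) (t : ℝ) (N : ℕ) (i j : Fin n) :
    T B t N i j = ∑ k ∈ range N, (t⁻¹)^(k+1) * (B^k) i j := by
  simp [T, Matrix.sum_apply, Matrix.smul_apply, smul_eq_mul]


lemma T_nonneg {B : Matrix (Fin n) (Fin n) ℝ} (hB : Nn B) {t : ℝ} (ht : 0 < t)
    (N : ℕ) : Nn (T B t N) := by
  intro i j
  rw [T_apply]
  exact Finset.sum_nonneg fun k _ => mul_nonneg (by positivity) (hB.pow k i j)

lemma T_succ (B : Matrix (Fin n) (Fin n) ℝ) (t : ℝ) (N : ℕ) (i j : Fin n) :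
    T B t (N+1) i j = T B t N i j + (t⁻¹)^(N+1) * (B^N) i j := by
  rw [T_apply, T_apply, Finset.sum_range_succ]

lemma T_mono {B : Matrix (Fin n) (Fin n) ℝ} (hB : Nn B) {t : ℝ} (ht : 0 < t)
    (i j : Fin n) : Monotone fun N => T B t N i j := by
  apply monotone_nat_of_le_succ
  intro N
  rw [T_succ]
  have : 0 ≤ (t⁻¹)^(N+1) * (B^N) i j := mul_nonneg (by positivity) (hB.pow N i j)
  linarith

lemma T_anti {B : Matrix (Fin n) (Fin n) ℝ} (hB : Nn B) {t t' : ℝ} (ht : 0 < t)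
    (htt : t ≤ t') (N : ℕ) (i j : Fin n) : T B t' N i j ≤ T B t N i j := by
  rw [T_apply, T_apply]
  refine Finset.sum_le_sum fun k _ => ?_
  refine mul_le_mul_of_nonneg_right ?_ (hB.pow k i j)
  exact pow_le_pow_left₀ (inv_nonneg.2 (ht.le.trans htt)) (inv_anti₀ ht htt) _

lemma key_left (B : Matrix (Fin n) (Fin n) ℝ) {t : ℝ} (ht : t ≠ 0) (N : ℕ) :
    (t • 1 - B) * T B t N = 1 - (t⁻¹)^N • B^N := by
  have h : ∀ k, (t • (1 : Matrix (Fin n) (Fin n) ℝ) - B) * ((t⁻¹)^(k+1) • B^k)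
      = (t⁻¹)^k • B^k - (t⁻¹)^(k+1) • B^(k+1) := by
    intro k
    rw [mul_smul_comm, sub_mul, smul_mul_assoc, one_mul, ← pow_succ', smul_sub, smul_smul,
        pow_succ, mul_assoc, inv_mul_cancel₀ ht, mul_one]
  rw [T, Finset.mul_sum, Finset.sum_congr rfl (fun k _ => h k),
      Finset.sum_range_sub' (fun k => (t⁻¹)^k • B^k)]
  simp

lemma key_right (B : Matrix (Fin n) (Fin n) ℝ) {t : ℝ} (ht : t ≠ 0) (N : ℕ) :
    T B t N * (t • 1 - B) = 1 - (t⁻¹)^N • B^N := by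
  have h : ∀ k, ((t⁻¹)^(k+1) • B^k) * (t • (1 : Matrix (Fin n) (Fin n) ℝ) - B)
      = (t⁻¹)^k • B^k - (t⁻¹)^(k+1) • B^(k+1) := by
    intro k
    rw [smul_mul_assoc, mul_sub, mul_smul_comm, mul_one, ← pow_succ, smul_sub, smul_smul,
        pow_succ (t⁻¹) k, mul_assoc, inv_mul_cancel₀ ht, mul_one]
  rw [T, Finset.sum_mul, Finset.sum_congr rfl (fun k _ => h k),
      Finset.sum_range_sub' (fun k => (t⁻¹)^k • B^k)]
  simp

lemma limQ (B : Matrix (Fin n) (Fin n) ℝ) (hB : Nn B) {t C : ℝ} (ht : 0 < t)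
    (hC : ∀ N i j, T B t N i j ≤ C) :
    ∃ Q, Nn Q ∧ (∀ N i j, T B t N i j ≤ Q i j) ∧
      (t • 1 - B) * Q = 1 ∧ Q * (t • 1 - B) = 1 := by
  have hbdd : ∀ i j, BddAbove (Set.range fun N => T B t N i j) := by
    intro i j
    exact ⟨C, by rintro x ⟨N, rfl⟩; exact hC N i j⟩
  set Q : Matrix (Fin n) (Fin n) ℝ := fun i j => ⨆ N, T B t N i j with hQdef
  have hlim : ∀ i j, Tendsto (fun N => T B t N i j) atTop (𝓝 (Q i j)) := fun i j =>
    tendsto_atTop_ciSup (T_mono hB ht i j) (hbdd i j)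
  have hle : ∀ N i j, T B t N i j ≤ Q i j := fun N i j => le_ciSup (hbdd i j) N
  have hQnn : Nn Q := by
    intro i j
    have h0 : T B t 0 i j = 0 := by simp [T_apply]
    exact h0 ▸ hle 0 i j
  have hpow : ∀ i j, Tendsto (fun N => ((t⁻¹)^N • B^N : Matrix (Fin n) (Fin n) ℝ) i j)
      atTop (𝓝 0) := by
    intro i j
    have heq : ∀ N, ((t⁻¹)^N • B^N : Matrix (Fin n) (Fin n) ℝ) i j
        = t * (T B t (N+1) i j - T B t N i j) := by
      intro N
      rw [T_succ, Matrix.smul_apply, smul_eq_mul]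
      rw [add_sub_cancel_left, pow_succ', ← mul_assoc, ← mul_assoc, mul_inv_cancel₀ ht.ne', one_mul]
    simp only [heq]
    have h1 : Tendsto (fun N => T B t (N+1) i j) atTop (𝓝 (Q i j)) :=
      (hlim i j).comp (tendsto_add_atTop_nat 1)
    have := (h1.sub (hlim i j)).const_mul t
    simpa using this
  have hmull : ∀ i j, Tendsto (fun N => ((t•1 - B) * T B t N) i j) atTop
      (𝓝 (((t•1 - B) * Q) i j)) := by
    intro i j
    simp only [Matrix.mul_apply]
    exact tendsto_finset_sum _ fun k _ => ((hlim k j).const_mul _)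
  have hmulr : ∀ i j, Tendsto (fun N => (T B t N * (t•1 - B)) i j) atTop
      (𝓝 ((Q * (t•1 - B)) i j)) := by
    intro i j
    simp only [Matrix.mul_apply]
    exact tendsto_finset_sum _ fun k _ => ((hlim i k).mul_const _)
  have hL : (t•1 - B) * Q = 1 := by
    ext i j
    refine tendsto_nhds_unique (hmull i j) ?_
    simp only [key_left B ht.ne' , Matrix.sub_apply]
    simpa using tendsto_const_nhds.sub (hpow i j)
  have hR : Q * (t•1 - B) = 1 := by
    ext i j
    refine tendsto_nhds_unique (hmulr i j) ?_
    simp only [key_right B ht.ne' , Matrix.sub_apply]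
    simpa using tendsto_const_nhds.sub (hpow i j)
  exact ⟨Q, hQnn, hle, hL, hR⟩


lemma lemA (B : Matrix (Fin n) (Fin n) ℝ) (hB : Nn B) {s : ℝ} (hs : 0 < s)
    (hU : ∀ t, s ≤ t → IsUnit (t • (1 : Matrix (Fin n) (Fin n) ℝ) - B)) :
    ∃ Q, Nn Q ∧ (s • 1 - B) * Q = 1 ∧ Q * (s • 1 - B) = 1 := by
  classical
  set G : Set ℝ := {t | s ≤ t ∧ ∃ C, ∀ N i j, T B t N i j ≤ C} with hGdef
  have hGne : (s + tot B) ∈ G := by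
    have ht₁ : 0 < s + tot B := by linarith [hB.tot_nonneg]
    refine ⟨by linarith [hB.tot_nonneg], (s + tot B)⁻¹ * (1 - tot B / (s + tot B))⁻¹, ?_⟩
    intro N i j
    set t₁ := s + tot B with ht₁def
    have hr0 : 0 ≤ tot B / t₁ := div_nonneg hB.tot_nonneg ht₁.le
    have hr1 : tot B / t₁ < 1 := by rw [div_lt_one ht₁]; linarith
    rw [T_apply]
    calc ∑ k ∈ range N, (t₁⁻¹)^(k+1) * (B^k) i j
        ≤ ∑ k ∈ range N, t₁⁻¹ * (tot B / t₁)^k := by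
          refine Finset.sum_le_sum fun k _ => ?_
          have h2 : (t₁⁻¹)^(k+1) * (B^k) i j ≤ (t₁⁻¹)^(k+1) * (tot B)^k :=
            mul_le_mul_of_nonneg_left (hB.pow_entry_le k i j) (by positivity)
          refine h2.trans_eq ?_
          rw [div_pow, pow_succ', inv_pow]
          field_simp
      _ = t₁⁻¹ * ∑ k ∈ range N, (tot B / t₁)^k := by rw [Finset.mul_sum]
      _ ≤ t₁⁻¹ * (1 - tot B / t₁)⁻¹ :=
          mul_le_mul_of_nonneg_left (geom_le hr0 hr1 N) (by positivity)
  have hbb : BddBelow G := ⟨s, fun t ht => ht.1⟩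
  set σ := sInf G with hσdef
  have hsσ : s ≤ σ := le_csInf ⟨_, hGne⟩ fun t ht => ht.1
  have hσ0 : 0 < σ := lt_of_lt_of_le hs hsσ
  have hup : ∀ t, σ < t → t ∈ G := by
    intro t htσ
    obtain ⟨t₀, ht₀G, ht₀t⟩ := exists_lt_of_csInf_lt ⟨_, hGne⟩ htσ
    obtain ⟨C, hC⟩ := ht₀G.2
    exact ⟨ht₀G.1.trans ht₀t.le, C, fun N i j =>
      (T_anti hB (hs.trans_le ht₀G.1) ht₀t.le N i j).trans (hC N i j)⟩
  obtain ⟨L, hL1, hL2⟩ : ∃ L, (σ • (1 : Matrix (Fin n) (Fin n) ℝ) - B) * L = 1 ∧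
      L * (σ • (1 : Matrix (Fin n) (Fin n) ℝ) - B) = 1 := by
    obtain ⟨u, hu⟩ := hU σ hsσ
    exact ⟨↑u⁻¹, by rw [← hu]; exact u.mul_inv, by rw [← hu]; exact u.inv_mul⟩
  set l := ∑ i, ∑ j, |L i j| with hldef
  have hl0 : 0 ≤ l := Finset.sum_nonneg fun _ _ => Finset.sum_nonneg fun _ _ => abs_nonneg _
  set δ : ℝ := (2*l+1)⁻¹ with hδdef
  have hδ0 : 0 < δ := by positivity
  have hδl : δ * l ≤ 1/2 := by
    rw [hδdef, inv_mul_le_iff₀ (by positivity)]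
    linarith
  -- every entry of T B t, for t slightly above σ, is bounded by 2l
  have hband : ∀ t, σ < t → t ≤ σ + δ → ∀ N i j, T B t N i j ≤ 2 * l := by
    intro t ht1 ht2 N i j
    obtain ⟨C, hC⟩ := (hup t ht1).2
    obtain ⟨Q, hQnn, hQle, hQL, hQR⟩ := limQ B hB (hσ0.trans ht1) hC
    have hσt : (σ • (1 : Matrix (Fin n) (Fin n) ℝ) - B) = (t•1 - B) + (σ - t) • 1 := by
      rw [sub_smul]; abel
    have hid : Q = L + (σ - t) • (Q * L) := by
      calc Q = Q * ((σ•1 - B) * L) := by rw [hL1, mul_one]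
        _ = (Q * (σ•1 - B)) * L := by rw [mul_assoc]
        _ = (Q * (t•1 - B) + (σ - t) • (Q * 1)) * L := by
            rw [hσt, mul_add, mul_smul_comm]
        _ = L + (σ - t) • (Q * L) := by
            rw [hQR, mul_one, add_mul, one_mul, smul_mul_assoc]
    have hQentry : ∀ i' j', Q i' j' ≤ |L i' j'| + (t - σ) * ∑ k, Q i' k * |L k j'| := by
      intro i' j'
      have h := congrFun (congrFun hid i') j'
      rw [Matrix.add_apply, Matrix.smul_apply, smul_eq_mul, Matrix.mul_apply] at h
      set X := ∑ k, Q i' k * L k j' with hXdef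
      have habs : |X| ≤ ∑ k, Q i' k * |L k j'| := by
        refine (Finset.abs_sum_le_sum_abs _ _).trans ?_
        refine Finset.sum_le_sum fun k _ => ?_
        rw [abs_mul, abs_of_nonneg (hQnn i' k)]
      have h2 : (σ - t) * X ≤ (t - σ) * |X| := by
        calc (σ - t) * X = (t - σ) * (-X) := by ring
          _ ≤ (t - σ) * |X| := mul_le_mul_of_nonneg_left (neg_le_abs X) (by linarith)
      calc Q i' j' = L i' j' + (σ - t) * X := h
        _ ≤ |L i' j'| + (t - σ) * |X| := add_le_add (le_abs_self _) h2
        _ ≤ |L i' j'| + (t - σ) * ∑ k, Q i' k * |L k j'| :=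
            add_le_add le_rfl (mul_le_mul_of_nonneg_left habs (by linarith))
    have hkey : ∑ i', ∑ j', ∑ k, Q i' k * |L k j'| ≤ tot Q * l := by
      calc ∑ i', ∑ j', ∑ k, Q i' k * |L k j'|
          = ∑ i', ∑ k, Q i' k * ∑ j', |L k j'| := by
            congr 1; funext i'
            rw [Finset.sum_comm]
            refine Finset.sum_congr rfl fun k _ => ?_
            rw [Finset.mul_sum]
        _ ≤ ∑ i', ∑ k, Q i' k * l := by
            refine Finset.sum_le_sum fun i' _ => Finset.sum_le_sum fun k _ => ?_
            refine mul_le_mul_of_nonneg_left ?_ (hQnn i' k)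
            exact Finset.single_le_sum (f := fun k => ∑ j', |L k j'|)
              (fun a _ => Finset.sum_nonneg fun b _ => abs_nonneg _) (mem_univ k)
        _ = tot Q * l := by rw [tot, Finset.sum_mul]; congr 1; funext i'; rw [Finset.sum_mul]
    have hsum : tot Q ≤ l + (t - σ) * (tot Q * l) := by
      calc tot Q = ∑ i', ∑ j', Q i' j' := rfl
        _ ≤ ∑ i', ∑ j', (|L i' j'| + (t - σ) * ∑ k, Q i' k * |L k j'|) :=
            Finset.sum_le_sum fun i' _ => Finset.sum_le_sum fun j' _ => hQentry i' j'
        _ = l + (t - σ) * ∑ i', ∑ j', ∑ k, Q i' k * |L k j'| := by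
            rw [Finset.mul_sum]
            rw [← Finset.sum_add_distrib]
            refine Finset.sum_congr rfl fun i' _ => ?_
            rw [Finset.mul_sum, ← Finset.sum_add_distrib]
        _ ≤ l + (t - σ) * (tot Q * l) :=
            add_le_add le_rfl (mul_le_mul_of_nonneg_left hkey (by linarith))
    have htQ : tot Q ≤ 2 * l := by
      have h4 : (t - σ) * (tot Q * l) ≤ δ * (tot Q * l) :=
        mul_le_mul_of_nonneg_right (by linarith) (mul_nonneg hQnn.tot_nonneg hl0)
      have h5 : δ * (tot Q * l) = (δ * l) * tot Q := by ring
      have h6 : (δ * l) * tot Q ≤ (1/2) * tot Q :=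
        mul_le_mul_of_nonneg_right hδl hQnn.tot_nonneg
      have h7 := hQnn.tot_nonneg
      nlinarith
    exact (hQle N i j).trans ((hQnn.entry_le_tot i j).trans htQ)
  have hσG : σ ∈ G := by
    refine ⟨hsσ, 2*l, ?_⟩
    intro N i j
    have hseq : Tendsto (fun m : ℕ => σ + δ / (m+1)) atTop (𝓝 σ) := by
      have h0 : Tendsto (fun m : ℕ => δ / ((m:ℝ)+1)) atTop (𝓝 0) := by
        have := tendsto_one_div_add_atTop_nhds_zero_nat.const_mul δ
        simpa only [mul_one_div, mul_zero] using this
      simpa only [add_zero] using (tendsto_const_nhds (x := σ)).add h0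
    have hTt : Tendsto (fun m : ℕ => T B (σ + δ/(m+1)) N i j) atTop (𝓝 (T B σ N i j)) := by
      simp only [T_apply]
      refine tendsto_finset_sum _ fun k _ => ?_
      exact ((hseq.inv₀ hσ0.ne').pow (k+1)).mul_const _
    refine le_of_tendsto hTt (Eventually.of_forall fun m => ?_)
    have hm0 : (0:ℝ) < (m:ℝ) + 1 := by positivity
    refine hband _ (lt_add_of_pos_right σ (by positivity)) ?_ N i j
    have : δ / ((m:ℝ)+1) ≤ δ := by
      rw [div_le_iff₀ hm0]
      nlinarith
    linarith
  obtain ⟨Cσ, hCσ⟩ := hσG.2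
  obtain ⟨Qσ, hQσnn, hQσle, hQσL, hQσR⟩ := limQ B hB hσ0 hCσ
  have hσeqs : σ = s := by
    by_contra hne
    have hlt : s < σ := lt_of_le_of_ne hsσ (Ne.symm hne)
    set qa := tot Qσ with hqadef
    have hqa0 : 0 ≤ qa := hQσnn.tot_nonneg
    set ε := min (σ - s) (2*qa+1)⁻¹ with hεdef
    have hε0 : 0 < ε := lt_min (by linarith) (by positivity)
    have hεqa : ε * qa ≤ 1/2 := by
      have h1 : ε ≤ (2*qa+1)⁻¹ := min_le_right _ _
      have h2 : ε * qa ≤ (2*qa+1)⁻¹ * qa := mul_le_mul_of_nonneg_right h1 hqa0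
      have h3 : (2*qa+1)⁻¹ * qa ≤ 1/2 := by
        rw [inv_mul_le_iff₀ (by positivity)]
        linarith
      linarith
    set t' := σ - ε with ht'def
    have ht's : s ≤ t' := by
      have := min_le_left (σ - s) (2*qa+1)⁻¹
      simp only [ht'def]
      linarith
    have ht'σ : t' < σ := by simp only [ht'def]; linarith
    have ht'0 : 0 < t' := lt_of_lt_of_le hs ht's
    have ht'G : t' ∈ G := by
      refine ⟨ht's, 2*qa, ?_⟩
      intro N i j
      set X := T B t' N with hXdef
      have hXnn : Nn X := T_nonneg hB ht'0 N
      have hkey : ∀ M, X i j ≤ 2*qa + tot X * (ε*qa)^M := by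
        intro M
        set P : Matrix (Fin n) (Fin n) ℝ := ∑ m ∈ range M, ε^m • Qσ^(m+1) with hPdef
        have hPnn : Nn P := by
          intro i' j'
          rw [hPdef, Matrix.sum_apply]
          exact Finset.sum_nonneg fun m _ => by
            rw [Matrix.smul_apply, smul_eq_mul]
            exact mul_nonneg (by positivity) (hQσnn.pow (m+1) i' j')
        have hPentry : ∀ i' j', P i' j' ≤ 2*qa := by
          intro i' j'
          rw [hPdef, Matrix.sum_apply]
          have hεqa1 : ε * qa < 1 := by linarith
          have hεqa0 : 0 ≤ ε * qa := mul_nonneg hε0.le hqa0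
          calc ∑ m ∈ range M, (ε^m • Qσ^(m+1)) i' j'
              ≤ ∑ m ∈ range M, qa * (ε*qa)^m := by
                refine Finset.sum_le_sum fun m _ => ?_
                rw [Matrix.smul_apply, smul_eq_mul]
                have := mul_le_mul_of_nonneg_left (hQσnn.pow_entry_le (m+1) i' j')
                  (pow_nonneg hε0.le m)
                refine this.trans_eq ?_
                rw [mul_pow, pow_succ]
                ring
            _ = qa * ∑ m ∈ range M, (ε*qa)^m := by rw [Finset.mul_sum]
            _ ≤ qa * (1 - ε*qa)⁻¹ :=
                mul_le_mul_of_nonneg_left (geom_le hεqa0 hεqa1 M) hqa0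
            _ ≤ qa * 2 := by
                refine mul_le_mul_of_nonneg_left ?_ hqa0
                rw [inv_le_comm₀ (by linarith) (by norm_num)]
                linarith
            _ = 2*qa := by ring
        have hinv : (t' • (1 : Matrix (Fin n) (Fin n) ℝ) - B) * P = 1 - ε^M • Qσ^M := by
          have hform : (t' • (1 : Matrix (Fin n) (Fin n) ℝ) - B) = (σ•1 - B) - ε•1 := by
            rw [ht'def, sub_smul]; abel
          rw [hform, sub_mul]
          have h1 : (σ • (1 : Matrix (Fin n) (Fin n) ℝ) - B) * P = ∑ m ∈ range M, ε^m • Qσ^m := by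
            rw [hPdef, Finset.mul_sum]
            refine Finset.sum_congr rfl fun m _ => ?_
            rw [mul_smul_comm, pow_succ', ← mul_assoc, hQσL, one_mul]
          have h2 : (ε • (1 : Matrix (Fin n) (Fin n) ℝ)) * P = ∑ m ∈ range M, ε^(m+1) • Qσ^(m+1) := by
            rw [hPdef, Finset.mul_sum]
            refine Finset.sum_congr rfl fun m _ => ?_
            rw [smul_mul_assoc, one_mul, smul_smul, ← pow_succ']
          rw [h1, h2, ← Finset.sum_sub_distrib,
              Finset.sum_range_sub' (fun m => ε^m • Qσ^m)]
          simp
        have hXid : X - ε^M • (X * Qσ^M) = P - (t'⁻¹)^N • (B^N * P) := by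
          have h3 : X * ((t'•1 - B) * P) = (X * (t'•1 - B)) * P := (mul_assoc _ _ _).symm
          rw [hinv, hXdef, key_right B ht'0.ne' N] at h3
          rw [mul_sub, mul_one, mul_smul_comm, sub_mul, one_mul, smul_mul_assoc] at h3
          rw [hXdef]
          exact h3
        have hcorr : (X * Qσ^M) i j ≤ tot X * qa^M := by
          rw [Matrix.mul_apply]
          calc ∑ k, X i k * (Qσ^M) k j ≤ ∑ k, X i k * qa^M :=
              Finset.sum_le_sum fun k _ =>
                mul_le_mul_of_nonneg_left (hQσnn.pow_entry_le M k j) (hXnn i k)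
            _ = (∑ k, X i k) * qa^M := by rw [Finset.sum_mul]
            _ ≤ tot X * qa^M :=
                mul_le_mul_of_nonneg_right (hXnn.row_le_tot i) (pow_nonneg hqa0 M)
        have hBP : 0 ≤ (t'⁻¹:ℝ)^N * (B^N * P) i j :=
          mul_nonneg (by positivity) ((hB.pow N).mul hPnn i j)
        have hentry := congrFun (congrFun hXid i) j
        rw [Matrix.sub_apply, Matrix.sub_apply, Matrix.smul_apply, Matrix.smul_apply,
            smul_eq_mul, smul_eq_mul] at hentry
        have h8 : X i j ≤ P i j + ε^M * ((X * Qσ^M) i j) := by linarith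
        have h9 : ε^M * ((X * Qσ^M) i j) ≤ ε^M * (tot X * qa^M) :=
          mul_le_mul_of_nonneg_left hcorr (pow_nonneg hε0.le M)
        calc X i j ≤ P i j + ε^M * ((X * Qσ^M) i j) := h8
          _ ≤ 2*qa + ε^M * (tot X * qa^M) := add_le_add (hPentry i j) h9
          _ = 2*qa + tot X * (ε*qa)^M := by rw [mul_pow]; ring
      have hlim2 : Tendsto (fun M => 2*qa + tot X * (ε*qa)^M) atTop (𝓝 (2*qa + tot X * 0)) := by
        refine tendsto_const_nhds.add (Tendsto.const_mul _ ?_)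
        refine tendsto_pow_atTop_nhds_zero_of_lt_one (mul_nonneg hε0.le hqa0) (by linarith)
      have := ge_of_tendsto hlim2 (Eventually.of_forall hkey)
      simpa using this
    exact absurd (csInf_le hbb ht'G) (not_le.2 ht'σ)
  rw [hσeqs] at hQσL hQσR
  exact ⟨Qσ, hQσnn, hQσL, hQσR⟩

end MetzlerAux

/-- If `F` is Metzler and Hurwitz stable, then there exists a positive vector `v`
with `vᵀ F < 0` entrywise. -/
theorem positive_vector_of_metzler_hurwitz
    (n : ℕ) (F : Matrix (Fin n) (Fin n) ℝ)
    (hMetzler : ∀ i j, i ≠ j → 0 ≤ F i j)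
    (hHurwitz : ∀ z ∈ spectrum ℂ (F.map (Complex.ofReal ·)), z.re < 0) :
    ∃ v : Fin n → ℝ, (∀ i, 0 < v i) ∧ ∀ j, (v ᵥ* F) j < 0 := by
  classical
  open MetzlerAux in
  set s : ℝ := 1 + ∑ i, |F i i| with hsdef
  have habs : ∀ i : Fin n, |F i i| ≤ ∑ k, |F k k| := fun i =>
    Finset.single_le_sum (f := fun k => |F k k|) (fun k _ => abs_nonneg _) (Finset.mem_univ i)
  have hs0 : (0:ℝ) < s := by
    have : (0:ℝ) ≤ ∑ i, |F i i| := Finset.sum_nonneg fun i _ => abs_nonneg _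
    linarith
  set B : Matrix (Fin n) (Fin n) ℝ := F + s • 1 with hBdef
  have hBnn : MetzlerAux.Nn B := by
    intro i j
    by_cases h : i = j
    · subst h
      have h1 : B i i = F i i + s := by
        simp [hBdef, Matrix.add_apply, Matrix.smul_apply, Matrix.one_apply]
      rw [h1]
      have := habs i
      have := neg_abs_le (F i i)
      linarith
    · have h1 : B i j = F i j := by
        simp [hBdef, Matrix.add_apply, Matrix.smul_apply, Matrix.one_apply, h]
      rw [h1]
      exact hMetzler i j h
  have hU : ∀ t, s ≤ t → IsUnit (t • (1 : Matrix (Fin n) (Fin n) ℝ) - B) := by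
    intro t ht
    by_contra hnu
    have hdet : (t • (1 : Matrix (Fin n) (Fin n) ℝ) - B).det = 0 := by
      by_contra hd
      exact hnu ((Matrix.isUnit_iff_isUnit_det _).2 (isUnit_iff_ne_zero.2 hd))
    have hmem : (((t - s : ℝ)) : ℂ) ∈ spectrum ℂ (F.map (Complex.ofReal ·)) := by
      rw [spectrum.mem_iff]
      intro hu
      rw [Matrix.isUnit_iff_isUnit_det] at hu
      have heq : (algebraMap ℂ (Matrix (Fin n) (Fin n) ℂ)) (((t - s : ℝ)) : ℂ)
          - F.map (Complex.ofReal ·)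
          = (t • (1 : Matrix (Fin n) (Fin n) ℝ) - B).map (Complex.ofReal ·) := by
        ext i j
        by_cases h : i = j <;>
          simp [Matrix.algebraMap_matrix_apply, h, hBdef, Matrix.map_apply,
            Matrix.sub_apply, Matrix.add_apply, Matrix.smul_apply, Matrix.one_apply] <;>
          push_cast <;> ring
      rw [heq] at hu
      have hdet2 : ((t • (1 : Matrix (Fin n) (Fin n) ℝ) - B).map (Complex.ofReal ·)).det = 0 := by
        have hmm : (t • (1 : Matrix (Fin n) (Fin n) ℝ) - B).map (Complex.ofReal ·)
            = Complex.ofRealHom.mapMatrix (t • (1 : Matrix (Fin n) (Fin n) ℝ) - B) := rfl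
        rw [hmm, ← RingHom.map_det, hdet, map_zero]
      rw [hdet2] at hu
      exact not_isUnit_zero hu
    have := hHurwitz _ hmem
    simp only [Complex.ofReal_re] at this
    linarith
  obtain ⟨Q, hQnn, hQl, hQr⟩ := MetzlerAux.lemA B hBnn hs0 hU
  have hsB : s • (1 : Matrix (Fin n) (Fin n) ℝ) - B = -F := by
    rw [hBdef]; abel
  rw [hsB] at hQl hQr
  have hQF : Q * F = -1 := by
    have h := hQr
    rw [mul_neg, neg_eq_iff_eq_neg] at h
    exact h
  refine ⟨fun j => ∑ i, Q i j, ?_, ?_⟩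
  · intro i
    have hnn : (0:ℝ) ≤ ∑ k, Q k i := Finset.sum_nonneg fun k _ => hQnn k i
    rcases hnn.lt_or_eq with h | h
    · exact h
    · exfalso
      have hall : ∀ k, Q k i = 0 := by
        intro k
        have := (Finset.sum_eq_zero_iff_of_nonneg (fun k _ => hQnn k i)).1 h.symm
        exact this k (Finset.mem_univ k)
      have h1 : ((-F) * Q) i i = 0 := by
        rw [Matrix.mul_apply]
        exact Finset.sum_eq_zero fun k _ => by rw [hall k, mul_zero]
      rw [hQl] at h1
      simp [Matrix.one_apply] at h1
  · intro j
    have hv : (((fun j => ∑ i, Q i j) : Fin n → ℝ) ᵥ* F) j = -1 := by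
      have h1 : (((fun j => ∑ i, Q i j) : Fin n → ℝ) ᵥ* F) j = ∑ i, (∑ k, Q k i) * F i j := by
        simp [Matrix.vecMul, dotProduct]
      rw [h1]
      have h2 : ∑ i, (∑ k, Q k i) * F i j = ∑ k, (Q * F) k j := by
        simp only [Matrix.mul_apply, Finset.sum_mul]
        rw [Finset.sum_comm]
      rw [h2, hQF]
      simp [Matrix.neg_apply, Matrix.one_apply]
    rw [hv]
    norm_num
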